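/- Let n ≥ 2. Assume that for every normalized Loewner chain (f_t)_{t≥0} the Loewner range R(f_t) := ⋃_{u≥0} f_u(𝔹ⁿ) is biholomorphic to ℂⁿ, and that for every normalized Loewner chain and every t ≥ 0 the pair (f_t(𝔹ⁿ), R(f_t)) is a Runge pair. Then [EXT] implies [FBR_a]. -/

import Mathlib

open Set Metric Filter

noncomputable section

/-- `E n` is `ℂⁿ` with the Euclidean norm. -/
abbrev E (n : ℕ) := EuclideanSpace ℂ (Fin n)

/-- A map is univalent on `D` if it is holomorphic and injective on `D`. -/
def Univalent {n : ℕ} (f : E n → E n) (D : Set (E n)) : Prop :=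
  DifferentiableOn ℂ f D ∧ Set.InjOn f D

/-- The class `S` of normalized univalent maps of the unit ball. -/
def classS (n : ℕ) : Set (E n → E n) :=
  {f | Univalent f (ball 0 1) ∧ f 0 = 0 ∧
    fderiv ℂ f 0 = ContinuousLinearMap.id ℂ (E n)}

/-- The class `S(ℂⁿ)` of normalized entire univalent maps. -/
def classSC (n : ℕ) : Set (E n → E n) :=
  {Ψ | Differentiable ℂ Ψ ∧ Function.Injective Ψ ∧ Ψ 0 = 0 ∧
    fderiv ℂ Ψ 0 = ContinuousLinearMap.id ℂ (E n)}

/-- A normalized Loewner chain on the unit ball. -/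
def IsLoewnerChain {n : ℕ} (f : ℝ → E n → E n) : Prop :=
  ContinuousOn (fun p : ℝ × E n => f p.1 p.2) (Ici 0 ×ˢ ball 0 1) ∧
  (∀ t, 0 ≤ t → Univalent (f t) (ball 0 1)) ∧
  (∀ s t, 0 ≤ s → s ≤ t → f s '' ball 0 1 ⊆ f t '' ball 0 1) ∧
  (∀ t, 0 ≤ t → f t 0 = 0 ∧
    fderiv ℂ (f t) 0 = (Real.exp t : ℂ) • ContinuousLinearMap.id ℂ (E n))

/-- The class `S¹` of maps embedding into a normalized Loewner chain. -/
def classS1 (n : ℕ) : Set (E n → E n) :=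
  {f | f ∈ classS n ∧ ∃ F : ℝ → E n → E n, IsLoewnerChain F ∧
    Set.EqOn (F 0) f (ball 0 1)}

/-- Uniform convergence on all compact subsets of `D`. -/
def ConvUnifOnCompacts {α β : Type*} [TopologicalSpace α] [UniformSpace β]
    (F : ℕ → α → β) (f : α → β) (D : Set α) : Prop :=
  ∀ K, K ⊆ D → IsCompact K → TendstoUniformlyOn F f atTop K

/-- `(D, Ω)` is a Runge pair. -/
def RungePair {n : ℕ} (D Ω : Set (E n)) : Prop :=
  D ⊆ Ω ∧ ∀ h : E n → ℂ, DifferentiableOn ℂ h D →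
    ∃ g : ℕ → E n → ℂ, (∀ k, DifferentiableOn ℂ (g k) Ω) ∧
      ConvUnifOnCompacts g h D

/-- `D` is Runge in `ℂⁿ`. -/
def IsRunge {n : ℕ} (D : Set (E n)) : Prop := RungePair D univ

/-- An automorphism of `ℂⁿ`. -/
def IsAutomorphism {n : ℕ} (Φ : E n → E n) : Prop :=
  Differentiable ℂ Φ ∧ Function.Bijective Φ

/-- A normalized automorphism of `ℂⁿ`. -/
def IsNormalizedAutomorphism {n : ℕ} (Φ : E n → E n) : Prop :=
  IsAutomorphism Φ ∧ Φ 0 = 0 ∧ fderiv ℂ Φ 0 = ContinuousLinearMap.id ℂ (E n)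

/-- `Ω` is biholomorphic to `ℂⁿ`. -/
def BiholToCn {n : ℕ} (Ω : Set (E n)) : Prop :=
  ∃ Ψ : E n → E n, Differentiable ℂ Ψ ∧ Function.Injective Ψ ∧ Set.range Ψ = Ω

/-- A Fatou–Bieberbach domain: a proper subdomain of `ℂⁿ` biholomorphic to `ℂⁿ`. -/
def IsFatouBieberbach {n : ℕ} (Ω : Set (E n)) : Prop :=
  Ω ≠ univ ∧ BiholToCn Ω

/-- The rescaling `f_r(z) = (1/r) f (r z)`. -/
def rescale {n : ℕ} (f : E n → E n) (r : ℝ) (z : E n) : E n :=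
  (r : ℂ)⁻¹ • f ((r : ℂ) • z)

/-- The Loewner range of a chain. -/
def LoewnerRange {n : ℕ} (f : ℝ → E n → E n) : Set (E n) :=
  ⋃ u ∈ Ici (0 : ℝ), f u '' ball 0 1

/-- (AL): the Andersén–Lempert approximation theorem for maps in `S` with Runge image. -/
def AL (n : ℕ) : Prop :=
  ∀ f ∈ classS n, IsRunge (f '' ball 0 1) →
    ∃ Φ : ℕ → E n → E n, (∀ k, IsNormalizedAutomorphism (Φ k)) ∧
      ConvUnifOnCompacts Φ f (ball (0 : E n) 1)

/-- (AL'): every univalent map of the ball with Runge image is approximable by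
automorphisms of `ℂⁿ`. -/
def AL' (n : ℕ) : Prop :=
  ∀ g : E n → E n, Univalent g (ball 0 1) → IsRunge (g '' ball 0 1) →
    ∃ Φ : ℕ → E n → E n, (∀ k, IsAutomorphism (Φ k)) ∧
      ConvUnifOnCompacts Φ g (ball (0 : E n) 1)

/-- (AL-nec): a map in `S` approximable by automorphisms of `ℂⁿ` has Runge image. -/
def ALnec (n : ℕ) : Prop :=
  ∀ f ∈ classS n,
    (∃ Φ : ℕ → E n → E n, (∀ k, IsAutomorphism (Φ k)) ∧
      ConvUnifOnCompacts Φ f (ball (0 : E n) 1)) →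
    IsRunge (f '' ball 0 1)

/-- [GAL]: every `f ∈ S` with non-Runge image is approximable by entire univalent maps. -/
def GAL (n : ℕ) : Prop :=
  ∀ f ∈ classS n, ¬ IsRunge (f '' ball 0 1) →
    ∃ Ψ : ℕ → E n → E n, (∀ k, Differentiable ℂ (Ψ k) ∧ Function.Injective (Ψ k)) ∧
      ConvUnifOnCompacts Ψ f (ball (0 : E n) 1)

/-- [EXT]: every `f ∈ S` extending univalently past the closed ball is in `S¹`. -/
def EXT (n : ℕ) : Prop :=
  ∀ f ∈ classS n,
    (∃ r > (1 : ℝ), ∃ F : E n → E n, Univalent F (ball 0 r) ∧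
      Set.EqOn F f (ball 0 1)) →
    f ∈ classS1 n

/-- [FBR]: every domain biholomorphic to the ball and not Runge in `ℂⁿ` sits in a
Fatou–Bieberbach domain in a Runge way. -/
def FBR (n : ℕ) : Prop :=
  ∀ D : Set (E n), IsOpen D →
    (∃ g : E n → E n, Univalent g (ball 0 1) ∧ g '' ball 0 1 = D) →
    ¬ IsRunge D →
    ∃ Ω : Set (E n), IsFatouBieberbach Ω ∧ D ⊆ Ω ∧ RungePair D Ω

/-- [GALˢ]: strong generalized Andersén–Lempert. -/
def GALs (n : ℕ) : Prop :=
  ∀ f ∈ classS n, ¬ IsRunge (f '' ball 0 1) →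
    ∃ Ω : Set (E n), IsFatouBieberbach Ω ∧
      ∃ Ψ : ℕ → E n → E n, (∀ k, Ψ k ∈ classSC n ∧ Set.range (Ψ k) = Ω) ∧
        ConvUnifOnCompacts Ψ f (ball (0 : E n) 1)

/-- [FBRₐ]. -/
def FBRa (n : ℕ) : Prop :=
  ∀ f ∈ classS n, ∀ r ∈ Ioo (0 : ℝ) 1,
    ∃ Ω : Set (E n), BiholToCn Ω ∧ f '' ball 0 r ⊆ Ω ∧
      RungePair (f '' ball 0 r) Ω

/-- [GALₐˢ]. -/
def GALas (n : ℕ) : Prop :=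
  ∀ f ∈ classS n, ¬ IsRunge (f '' ball 0 1) → ∀ r ∈ Ioo (0 : ℝ) 1,
    ∃ Ω : Set (E n), IsFatouBieberbach Ω ∧
      ∃ Ψ : ℕ → E n → E n, (∀ k, Ψ k ∈ classSC n ∧ Set.range (Ψ k) = Ω) ∧
        ConvUnifOnCompacts Ψ (rescale f r) (ball (0 : E n) 1)

/-- A domain is entire-convexshapelike if some entire univalent map pulls it back to
a convex set. -/
def EntireConvexshapelike {n : ℕ} (Ω : Set (E n)) : Prop :=
  ∃ Ψ : E n → E n, Differentiable ℂ Ψ ∧ Function.Injective Ψ ∧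
    Ω ⊆ Set.range Ψ ∧ Convex ℝ (Ψ ⁻¹' Ω)

/-- `S¹` is dense in `S` for uniform convergence on compacta. -/
def DenseS1 (n : ℕ) : Prop :=
  ∀ f ∈ classS n, ∃ g : ℕ → E n → E n, (∀ k, g k ∈ classS1 n) ∧
    ConvUnifOnCompacts g f (ball (0 : E n) 1)
section AuxStmt10

variable {n : ℕ}

lemma univalent_rescale_aux {f : E n → E n} (hf : Univalent f (ball 0 1)) {r : ℝ}
    (hr0 : 0 < r) : Univalent (rescale f r) (ball 0 (1 / r)) := by
  have hrc : (r : ℂ) ≠ 0 := Complex.ofReal_ne_zero.mpr hr0.ne'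
  have hmaps : Set.MapsTo (fun z : E n => (r : ℂ) • z) (ball 0 (1 / r)) (ball 0 1) := by
    intro z hz
    rw [mem_ball_zero_iff] at hz ⊢
    rw [norm_smul, Complex.norm_real, Real.norm_eq_abs, abs_of_pos hr0]
    calc r * ‖z‖ < r * (1 / r) := mul_lt_mul_of_pos_left hz hr0
      _ = 1 := mul_one_div_cancel hr0.ne'
  constructor
  · exact (hf.1.comp ((differentiable_id.const_smul ((r : ℂ))).differentiableOn) hmaps).const_smul ((r : ℂ)⁻¹)
  · intro x hx y hy hxy
    have h1 : f ((r : ℂ) • x) = f ((r : ℂ) • y) :=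
      smul_right_injective (E n) (inv_ne_zero hrc) hxy
    have := hf.2 (hmaps hx) (hmaps hy) h1
    exact smul_right_injective (E n) hrc this

lemma rescale_mem_classS {f : E n → E n} (hf : f ∈ classS n) {r : ℝ}
    (hr0 : 0 < r) (hr1 : r < 1) : rescale f r ∈ classS n := by
  obtain ⟨hfu, hf0, hfD⟩ := hf
  have hrc : (r : ℂ) ≠ 0 := Complex.ofReal_ne_zero.mpr hr0.ne'
  have h1r : (1 : ℝ) ≤ 1 / r := by
    rw [le_div_iff₀ hr0]; linarith
  have huni := univalent_rescale_aux hfu hr0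
  refine ⟨⟨huni.1.mono (ball_subset_ball h1r), huni.2.mono (ball_subset_ball h1r)⟩, ?_, ?_⟩
  · simp [rescale, hf0]
  · have hdf : DifferentiableAt ℂ f 0 :=
      hfu.1.differentiableAt (isOpen_ball.mem_nhds (by simp))
    have hfid : HasFDerivAt f (ContinuousLinearMap.id ℂ (E n)) 0 := by
      have := hdf.hasFDerivAt
      rwa [hfD] at this
    have hσ0 : HasFDerivAt (fun z : E n => (r : ℂ) • z)
        ((r : ℂ) • ContinuousLinearMap.id ℂ (E n)) 0 := by
      have h := ((r : ℂ) • ContinuousLinearMap.id ℂ (E n)).hasFDerivAt (x := (0 : E n))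
      have hkey : (⇑((r : ℂ) • ContinuousLinearMap.id ℂ (E n)) : E n → E n)
          = fun z => (r : ℂ) • z := by funext z; simp
      rwa [hkey] at h
    have h1 : HasFDerivAt (f ∘ fun z : E n => (r : ℂ) • z)
        ((ContinuousLinearMap.id ℂ (E n)).comp ((r : ℂ) • ContinuousLinearMap.id ℂ (E n))) 0 := by
      apply HasFDerivAt.comp
      · simpa using hfid
      · exact hσ0
    have h2 := h1.const_smul ((r : ℂ)⁻¹)
    have h3 : HasFDerivAt (rescale f r)
        ((r : ℂ)⁻¹ • (ContinuousLinearMap.id ℂ (E n)).comp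
          ((r : ℂ) • ContinuousLinearMap.id ℂ (E n))) 0 := h2
    have h4 := h3.fderiv
    rw [h4]
    ext z
    simp [smul_smul, inv_mul_cancel₀ hrc]

lemma rungePair_smul_image {D R : Set (E n)} (hRP : RungePair D R) {c : ℂ} (hc : c ≠ 0) :
    RungePair ((fun z : E n => c • z) '' D) ((fun z : E n => c • z) '' R) := by
  obtain ⟨hsub, happ⟩ := hRP
  set σ := fun z : E n => c • z with hσdef
  set τ := fun z : E n => c⁻¹ • z with hτdef
  have hστ : ∀ x, σ (τ x) = x := fun x => by
    simp [hσdef, hτdef, smul_smul, mul_inv_cancel₀ hc]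
  have hτσ : ∀ x, τ (σ x) = x := fun x => by
    simp [hσdef, hτdef, smul_smul, inv_mul_cancel₀ hc]
  have hσd : Differentiable ℂ σ := differentiable_id.const_smul c
  have hτd : Differentiable ℂ τ := differentiable_id.const_smul c⁻¹
  refine ⟨Set.image_mono hsub, fun u hu => ?_⟩
  have hcomp : DifferentiableOn ℂ (u ∘ σ) D :=
    hu.comp hσd.differentiableOn (Set.mapsTo_image σ D)
  obtain ⟨g, hgd, hgc⟩ := happ (u ∘ σ) hcomp
  refine ⟨fun k => g k ∘ τ, fun k => (hgd k).comp hτd.differentiableOn ?_, ?_⟩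
  · intro x hx
    obtain ⟨y, hy, rfl⟩ := hx
    rw [hτσ]; exact hy
  · intro K hK hKc
    have hK' : τ '' K ⊆ D := by
      intro x hx
      obtain ⟨y, hy, rfl⟩ := hx
      obtain ⟨z, hz, rfl⟩ := hK hy
      rw [hτσ]; exact hz
    have hKc' : IsCompact (τ '' K) := hKc.image hτd.continuous
    have h1 := (hgc (τ '' K) hK' hKc').comp τ
    have h2 := h1.mono (fun x hx => Set.mem_preimage.mpr (Set.mem_image_of_mem τ hx))
    have heq : ((u ∘ σ) ∘ τ) = u := funext fun x => congrArg u (hστ x)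
    rwa [heq] at h2

lemma biholToCn_smul_image {R : Set (E n)} (h : BiholToCn R) {c : ℂ} (hc : c ≠ 0) :
    BiholToCn ((fun z : E n => c • z) '' R) := by
  obtain ⟨Ψ, hd, hi, hr⟩ := h
  refine ⟨fun z => c • Ψ z, hd.const_smul c,
    fun x y hxy => hi (smul_right_injective (E n) hc hxy), ?_⟩
  rw [show (fun z => c • Ψ z) = (fun z : E n => c • z) ∘ Ψ from rfl, Set.range_comp, hr]

end AuxStmt10

/-- assuming that Loewner ranges are biholomorphic to `ℂⁿ` and that
each `(f_t(𝔹ⁿ), R(f_t))` is a Runge pair, [EXT] implies [FBRₐ]. -/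
theorem stmt10 (n : ℕ) (hn : 2 ≤ n)
    (hrange : ∀ f : ℝ → E n → E n, IsLoewnerChain f → BiholToCn (LoewnerRange f))
    (hrunge : ∀ f : ℝ → E n → E n, IsLoewnerChain f → ∀ t : ℝ, 0 ≤ t →
      RungePair (f t '' ball 0 1) (LoewnerRange f))
    (hEXT : EXT n) : FBRa n := by
  intro f hf r hr
  obtain ⟨hr0, hr1⟩ := hr
  have hrc : (r : ℂ) ≠ 0 := Complex.ofReal_ne_zero.mpr hr0.ne'
  set g := rescale f r with hgdef
  have hgS : g ∈ classS n := rescale_mem_classS hf hr0 hr1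
  have hext : ∃ ρ > (1 : ℝ), ∃ F : E n → E n, Univalent F (ball 0 ρ) ∧
      Set.EqOn F g (ball 0 1) := by
    refine ⟨1 / r, ?_, g, univalent_rescale_aux hf.1 hr0, fun _ _ => rfl⟩
    rw [gt_iff_lt, lt_div_iff₀ hr0]; linarith
  obtain ⟨-, F, hF, hFeq⟩ := hEXT g hgS hext
  have hD : F 0 '' ball 0 1 = g '' ball 0 1 := hFeq.image_eq
  have hRP := hrunge F hF 0 le_rfl
  rw [hD] at hRP
  have hbih := hrange F hF
  -- the image identity `f '' ball 0 r = σ '' (g '' ball 0 1)` with σ z = r • z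
  have himg : f '' ball 0 r = (fun z : E n => (r : ℂ) • z) '' (g '' ball 0 1) := by
    rw [← Set.image_comp]
    have h1 : ((fun z : E n => (r : ℂ) • z) ∘ g) = fun z => f ((r : ℂ) • z) := by
      funext z
      simp only [Function.comp_apply, hgdef, rescale, smul_smul, mul_inv_cancel₀ hrc, one_smul]
    rw [h1, show (fun z : E n => f ((r : ℂ) • z)) = f ∘ (fun z : E n => (r : ℂ) • z) from rfl,
      Set.image_comp]
    congr 1
    have h2 : (fun z : E n => (r : ℂ) • z) '' ball 0 1 = ball (0 : E n) r := by
      ext w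
      constructor
      · rintro ⟨z, hz, rfl⟩
        rw [mem_ball_zero_iff] at hz ⊢
        rw [norm_smul, Complex.norm_real, Real.norm_eq_abs, abs_of_pos hr0]
        calc r * ‖z‖ < r * 1 := mul_lt_mul_of_pos_left hz hr0
          _ = r := mul_one r
      · intro hw
        refine ⟨(r : ℂ)⁻¹ • w, ?_, ?_⟩
        · rw [mem_ball_zero_iff] at hw ⊢
          rw [norm_smul, norm_inv, Complex.norm_real, Real.norm_eq_abs, abs_of_pos hr0]
          calc r⁻¹ * ‖w‖ < r⁻¹ * r := mul_lt_mul_of_pos_left hw (inv_pos.mpr hr0)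
            _ = 1 := inv_mul_cancel₀ hr0.ne'
        · show (r : ℂ) • ((r : ℂ)⁻¹ • w) = w
          rw [smul_smul, mul_inv_cancel₀ hrc, one_smul]
    rw [h2]
  refine ⟨(fun z : E n => (r : ℂ) • z) '' LoewnerRange F, biholToCn_smul_image hbih hrc, ?_, ?_⟩
  · rw [himg]
    exact Set.image_mono hRP.1
  · rw [himg]
    exact rungePair_smul_image hRP hrc
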